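/- For every real p ∈ (1,2], every n ∈ ℕ, and any independent real-valued random variables Y₁,…,Yₙ each with mean zero and finite p-th absolute moment, E[|∑_{i=1}^n Y_i|^p] ≤ 2^p · ∑_{i=1}^n E[|Y_i|^p]. -/

import Mathlib

open MeasureTheory ProbabilityTheory Real
open scoped ENNReal NNReal

variable {p : ℝ}

private lemma two_rpow_ge (hp1 : 1 ≤ p) : p + 1 ≤ (2:ℝ) ^ p := by
  have h := one_add_mul_self_le_rpow_one_add (s := 1) (by norm_num) hp1
  norm_num at h
  linarith

private lemma bern (hp1 : 1 ≤ p) {a b : ℝ} (ha : 0 ≤ a) (hb : 0 < b) :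
    b ^ p + p * b ^ (p - 1) * (a - b) ≤ a ^ p := by
  have hs : (-1 : ℝ) ≤ a / b - 1 := by
    have : 0 ≤ a / b := div_nonneg ha hb.le
    linarith
  have h := one_add_mul_self_le_rpow_one_add hs hp1
  have hab : (1 + (a / b - 1)) = a / b := by ring
  rw [hab, Real.div_rpow ha hb.le] at h
  have hbp : (0:ℝ) < b ^ p := Real.rpow_pos_of_pos hb p
  have h' : (1 + p * (a / b - 1)) * b ^ p ≤ a ^ p := by
    calc (1 + p * (a / b - 1)) * b ^ p ≤ (a ^ p / b ^ p) * b ^ p :=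
          mul_le_mul_of_nonneg_right h hbp.le
      _ = a ^ p := div_mul_cancel₀ _ hbp.ne'
  have hbb : b ^ (p - 1) = b ^ p / b := by
    rw [Real.rpow_sub hb, Real.rpow_one]
  rw [hbb]
  have hbne : b ≠ 0 := hb.ne'
  calc b ^ p + p * (b ^ p / b) * (a - b) = (1 + p * (a / b - 1)) * b ^ p := by
        field_simp
    _ ≤ a ^ p := h'

private lemma subadd {r : ℝ} (hr0 : 0 ≤ r) (hr1 : r ≤ 1) {a b : ℝ} (ha : 0 ≤ a) (hb : 0 ≤ b) :
    (a + b) ^ r ≤ a ^ r + b ^ r := by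
  have h := NNReal.rpow_add_le_add_rpow a.toNNReal b.toNNReal hr0 hr1
  have h2 := NNReal.coe_le_coe.mpr h
  push_cast at h2
  rwa [Real.coe_toNNReal a ha, Real.coe_toNNReal b hb] at h2

private lemma rpow_sub_one_mul {a : ℝ} (ha : 0 ≤ a) (hp1 : 1 ≤ p) :
    a ^ (p - 1) * a = a ^ p := by
  rcases eq_or_lt_of_le ha with h | h
  · rw [← h]
    simp [Real.zero_rpow (by linarith : p ≠ 0)]
  · calc a ^ (p - 1) * a = a ^ (p - 1 + 1) := (Real.rpow_add_one h.ne' (p - 1)).symm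
      _ = a ^ p := by norm_num

private lemma key_pos (hp1 : 1 ≤ p) (hp2 : p ≤ 2) {x y : ℝ} (hx : 0 < x) (hy : |y| < x) :
    |x + y| ^ p ≤ x ^ p + p * x ^ (p - 1) * y + 2 ^ p * |y| ^ p := by
  obtain ⟨hy1, hy2⟩ := abs_lt.mp hy
  have hxy0 : 0 < x + y := by linarith
  rw [abs_of_pos hxy0]
  have hp0 : (0:ℝ) < p := by linarith
  have h2p : p + 1 ≤ (2:ℝ) ^ p := two_rpow_ge hp1
  rcases le_or_gt 0 y with hy0 | hy0
  · rw [abs_of_nonneg hy0]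
    have h1 := bern hp1 (le_of_lt hx) hxy0
    have h1' : (x + y) ^ p ≤ x ^ p + p * (x + y) ^ (p - 1) * y := by nlinarith
    have h2 : (x + y) ^ (p - 1) ≤ x ^ (p - 1) + y ^ (p - 1) :=
      subadd (by linarith) (by linarith) hx.le hy0
    have h3 : y ^ (p - 1) * y = y ^ p := rpow_sub_one_mul hy0 hp1
    have h4 : 0 ≤ y ^ p := Real.rpow_nonneg hy0 p
    nlinarith [mul_le_mul_of_nonneg_right h2 (mul_nonneg hp0.le hy0)]
  · rw [abs_of_neg hy0]
    have hynn : (0:ℝ) ≤ -y := by linarith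
    have h1 := bern hp1 (le_of_lt hx) hxy0
    rw [show x - (x + y) = -y by ring] at h1
    have h2 : x ^ (p - 1) ≤ (x + y) ^ (p - 1) + (-y) ^ (p - 1) := by
      have h := subadd (r := p - 1) (by linarith) (by linarith) hxy0.le hynn
      rwa [show x + y + -y = x by ring] at h
    have h3 : (-y) ^ (p - 1) * (-y) = (-y) ^ p := rpow_sub_one_mul hynn hp1
    have h4 : 0 ≤ (-y) ^ p := Real.rpow_nonneg hynn p
    nlinarith [mul_le_mul_of_nonneg_right h2 (mul_nonneg hp0.le hynn),
      mul_le_mul_of_nonneg_right h2p h4]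


private lemma key_ineq (hp1 : 1 ≤ p) (hp2 : p ≤ 2) (x y : ℝ) :
    |x + y| ^ p ≤ |x| ^ p + p * (Real.sign x * |x| ^ (p - 1)) * y + 2 ^ p * |y| ^ p := by
  have hp0 : (0:ℝ) < p := by linarith
  have h2p : p + 1 ≤ (2:ℝ) ^ p := two_rpow_ge hp1
  have hxp : (0:ℝ) ≤ |x| ^ p := Real.rpow_nonneg (abs_nonneg x) p
  have hyp : (0:ℝ) ≤ |y| ^ p := Real.rpow_nonneg (abs_nonneg y) p
  have hx1 : (0:ℝ) ≤ |x| ^ (p - 1) := Real.rpow_nonneg (abs_nonneg x) (p - 1)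
  have hcross : p * (Real.sign x * |x| ^ (p - 1)) * y = p * |x| ^ (p - 1) * (Real.sign x * y) := by
    ring
  rcases le_or_gt (|x|) (|y|) with hxy | hxy
  · -- Case |x| ≤ |y|
    rcases le_or_gt 0 (Real.sign x * y) with hc | hc
    · -- cross term nonnegative
      have hL : |x + y| ^ p ≤ 2 ^ p * |y| ^ p := by
        have h1 : |x + y| ≤ 2 * |y| := (abs_add_le x y).trans (by linarith)
        have h2 : |x + y| ^ p ≤ (2 * |y|) ^ p :=
          Real.rpow_le_rpow (abs_nonneg _) h1 hp0.le
        rwa [Real.mul_rpow (by norm_num) (abs_nonneg y)] at h2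
      have hcr : 0 ≤ p * (Real.sign x * |x| ^ (p - 1)) * y := by
        rw [hcross]
        exact mul_nonneg (mul_nonneg hp0.le hx1) hc
      linarith
    · -- cross term negative: x and y have opposite (strict) signs
      have hx0 : x ≠ 0 := by
        rintro rfl
        simp [Real.sign_zero] at hc
      have hsy : Real.sign x * y = -|y| := by
        rcases hx0.lt_or_gt with h | h
        · rw [Real.sign_of_neg h] at hc ⊢
          have : 0 < y := by linarith [neg_neg y]; 
          rw [abs_of_pos this]; ring
        · rw [Real.sign_of_pos h] at hc ⊢
          have : y < 0 := by linarith
          rw [abs_of_neg this]; ring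
      have hL : |x + y| ≤ |y| := by
        rcases hx0.lt_or_gt with h | h
        · have hy' : 0 < y := by
            rw [Real.sign_of_neg h] at hc; linarith
          have hxle : -y ≤ x := by
            have := neg_abs_le x
            rw [abs_of_pos hy'] at hxy
            linarith
          rw [abs_of_pos hy']
          exact abs_le.mpr ⟨by linarith, by linarith⟩
        · have hy' : y < 0 := by
            rw [Real.sign_of_pos h] at hc; linarith
          have hxle : x ≤ -y := by
            rw [abs_of_neg hy'] at hxy
            exact (le_abs_self x).trans hxy
          rw [abs_of_neg hy']
          exact abs_le.mpr ⟨by linarith, by linarith⟩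
      have hLp : |x + y| ^ p ≤ |y| ^ p :=
        Real.rpow_le_rpow (abs_nonneg _) hL hp0.le
      have h1 : |x| ^ (p - 1) ≤ |y| ^ (p - 1) :=
        Real.rpow_le_rpow (abs_nonneg x) hxy (by linarith)
      have h3 : |y| ^ (p - 1) * |y| = |y| ^ p := rpow_sub_one_mul (abs_nonneg y) hp1
      have hcr : -(p * (|y| ^ p)) ≤ p * (Real.sign x * |x| ^ (p - 1)) * y := by
        rw [hcross, hsy]
        have := mul_le_mul_of_nonneg_right h1 (abs_nonneg y)
        nlinarith
      nlinarith [mul_le_mul_of_nonneg_right h2p hyp]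
  · -- Case |y| < |x| : x ≠ 0
    rcases lt_trichotomy x 0 with hx | hx | hx
    · have h := key_pos hp1 hp2 (x := -x) (y := -y) (by linarith : (0:ℝ) < -x) (by rw [abs_neg]; rwa [abs_of_neg hx] at hxy)
      rw [show -x + -y = -(x + y) by ring, abs_neg, abs_neg] at h
      rw [Real.sign_of_neg hx, abs_of_neg hx]
      calc |x + y| ^ p
          ≤ (-x) ^ p + p * (-x) ^ (p - 1) * (-y) + 2 ^ p * |y| ^ p := h
        _ = (-x) ^ p + p * (-1 * (-x) ^ (p - 1)) * y + 2 ^ p * |y| ^ p := by ring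
    · exact absurd hx.symm (by rintro rfl; simp at hxy; linarith [abs_nonneg y])
    · have h := key_pos hp1 hp2 hx (by rwa [abs_of_pos hx] at hxy)
      rw [Real.sign_of_pos hx, abs_of_pos hx]
      calc |x + y| ^ p ≤ x ^ p + p * x ^ (p - 1) * y + 2 ^ p * |y| ^ p := h
        _ = x ^ p + p * (1 * x ^ (p - 1)) * y + 2 ^ p * |y| ^ p := by ring

private lemma abs_sign_le (x : ℝ) : |Real.sign x| ≤ 1 := by
  rcases lt_trichotomy x 0 with h | h | h
  · rw [Real.sign_of_neg h]; norm_num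
  · subst h; rw [Real.sign_zero]; norm_num
  · rw [Real.sign_of_pos h]; norm_num

private lemma measurable_sign : Measurable Real.sign := by
  unfold Real.sign
  exact Measurable.ite (measurableSet_lt measurable_id measurable_const) measurable_const
    (Measurable.ite (measurableSet_lt measurable_const measurable_id) measurable_const
      measurable_const)

private lemma phi_bound (hp1 : 1 ≤ p) (t : ℝ) :
    |Real.sign t * |t| ^ (p - 1)| ≤ 1 + |t| ^ p := by
  have h1 : |Real.sign t * |t| ^ (p - 1)| ≤ |t| ^ (p - 1) := by
    rw [abs_mul, abs_of_nonneg (Real.rpow_nonneg (abs_nonneg t) _)]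
    have := abs_sign_le t
    nlinarith [Real.rpow_nonneg (abs_nonneg t) (p - 1)]
  have h2 : |t| ^ (p - 1) ≤ 1 + |t| ^ p := by
    rcases le_or_gt (|t|) 1 with h | h
    · have := Real.rpow_le_one (abs_nonneg t) h (by linarith : (0:ℝ) ≤ p - 1)
      have := Real.rpow_nonneg (abs_nonneg t) p
      linarith
    · have := Real.rpow_le_rpow_of_exponent_le h.le (by linarith : p - 1 ≤ p)
      linarith
  linarith

/-- Biggins' inequality: for `p ∈ (1,2]` and independent centered random
variables `Y₁,…,Yₙ` with finite `p`-th moments,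
`E[|∑ Yᵢ|^p] ≤ 2^p ∑ E[|Yᵢ|^p]`. -/
theorem biggins_moment_inequality {Ω : Type*} [MeasurableSpace Ω]
    (P : Measure Ω) [IsProbabilityMeasure P]
    (p : ℝ) (hp1 : 1 < p) (hp2 : p ≤ 2)
    (n : ℕ) (Y : Fin n → Ω → ℝ)
    (hmeas : ∀ i, Measurable (Y i))
    (hindep : iIndepFun Y P)
    (hmean : ∀ i, ∫ ω, Y i ω ∂P = 0)
    (hmom : ∀ i, Integrable (fun ω => |Y i ω| ^ p) P) :
    ∫ ω, |∑ i, Y i ω| ^ p ∂P ≤ 2 ^ p * ∑ i, ∫ ω, |Y i ω| ^ p ∂P := by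
  have hp0 : (0:ℝ) < p := by linarith
  set q : ℝ≥0∞ := ENNReal.ofReal p with hq
  have hq0 : q ≠ 0 := by simp [hq, ENNReal.ofReal_eq_zero]; linarith
  have hqt : q ≠ ∞ := ENNReal.ofReal_ne_top
  have hqr : q.toReal = p := ENNReal.toReal_ofReal hp0.le
  have hq1 : 1 ≤ q := by
    rw [hq, ← ENNReal.ofReal_one]
    exact ENNReal.ofReal_le_ofReal hp1.le
  -- each Y i is in L^q
  have hMem : ∀ i, MemLp (Y i) q P := by
    intro i
    have h1 : MemLp (fun ω => |Y i ω| ^ p) 1 P := memLp_one_iff_integrable.mpr (hmom i)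
    have h2 := memLp_norm_rpow_iff (μ := P) (q := q) (p := q) (hmeas i).aestronglyMeasurable hq0 hqt
    rw [ENNReal.div_self hq0 hqt, hqr] at h2
    simp only [Real.norm_eq_abs] at h2
    exact h2.mp h1
  -- the auxiliary sign function
  set φ : ℝ → ℝ := fun x => Real.sign x * |x| ^ (p - 1) with hφdef
  have hφm : Measurable φ :=
    measurable_sign.mul ((Real.continuous_rpow_const (by linarith)).measurable.comp
      continuous_abs.measurable)
  -- main induction over finsets
  have main : ∀ s : Finset (Fin n),
      ∫ ω, |∑ i ∈ s, Y i ω| ^ p ∂P ≤ 2 ^ p * ∑ i ∈ s, ∫ ω, |Y i ω| ^ p ∂P := by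
    intro s
    induction s using Finset.induction_on with
    | empty => simp [Real.zero_rpow hp0.ne']
    | @insert a s ha ih =>
      simp_rw [Finset.sum_insert ha]
      set S : Ω → ℝ := fun ω => ∑ i ∈ s, Y i ω with hSdef
      have hSm : Measurable S := by
        apply Finset.measurable_sum
        exact fun i _ => hmeas i
      have hSmem : MemLp S q P := memLp_finsetSum s (fun i _ => hMem i)
      have hSp_int : Integrable (fun ω => |S ω| ^ p) P := by
        have := hSmem.integrable_norm_rpow hq0 hqt
        simpa [Real.norm_eq_abs, hqr] using this
      have hSYmem : MemLp (fun ω => S ω + Y a ω) q P := by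
        have := hSmem.add (hMem a)
        exact this
      have hSY_int : Integrable (fun ω => |S ω + Y a ω| ^ p) P := by
        have := hSYmem.integrable_norm_rpow hq0 hqt
        simpa [Real.norm_eq_abs, hqr] using this
      -- independence of S and Y a
      have hind : IndepFun S (Y a) P := by
        have h := hindep.indepFun_finsetSum_of_notMem hmeas ha
        have : (∑ j ∈ s, Y j) = S := by
          funext ω
          simp [hSdef, Finset.sum_apply]
        rwa [this] at h
      have hindφ : IndepFun (fun ω => φ (S ω)) (Y a) P := by
        have := hind.comp hφm measurable_id
        exact this
      -- integrability of φ ∘ S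
      have hφS_int : Integrable (fun ω => φ (S ω)) P := by
        apply Integrable.mono' ((integrable_const (1:ℝ)).add hSp_int)
          ((hφm.comp hSm).aestronglyMeasurable)
        filter_upwards with ω
        simpa [Real.norm_eq_abs, hφdef] using phi_bound hp1.le (S ω)
      have hYa_int : Integrable (Y a) P := (hMem a).integrable hq1
      have hprod_int : Integrable (fun ω => φ (S ω) * Y a ω) P :=
        hindφ.integrable_mul hφS_int hYa_int
      -- the cross term vanishes
      have hcross : ∫ ω, φ (S ω) * Y a ω ∂P = 0 := by
        have h := hindφ.integral_fun_mul_eq_mul_integral (hφm.comp hSm).aestronglyMeasurable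
          (hmeas a).aestronglyMeasurable
        rw [h, hmean a, mul_zero]
      -- pointwise inequality and integral_mono
      have hpt : ∀ ω, |Y a ω + S ω| ^ p ≤
          |S ω| ^ p + (p * (φ (S ω) * Y a ω) + 2 ^ p * |Y a ω| ^ p) := by
        intro ω
        rw [add_comm (Y a ω) (S ω)]
        have := key_ineq hp1.le hp2 (S ω) (Y a ω)
        calc |S ω + Y a ω| ^ p
            ≤ |S ω| ^ p + p * (Real.sign (S ω) * |S ω| ^ (p - 1)) * Y a ω
              + 2 ^ p * |Y a ω| ^ p := this
          _ = |S ω| ^ p + (p * (φ (S ω) * Y a ω) + 2 ^ p * |Y a ω| ^ p) := by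
              simp only [hφdef]; ring
      have hmono : ∫ ω, |Y a ω + S ω| ^ p ∂P ≤
          ∫ ω, (|S ω| ^ p + (p * (φ (S ω) * Y a ω) + 2 ^ p * |Y a ω| ^ p)) ∂P := by
        apply integral_mono _ _ hpt
        · have : (fun ω => |Y a ω + S ω| ^ p) = fun ω => |S ω + Y a ω| ^ p := by
            funext ω; rw [add_comm]
          rw [this]; exact hSY_int
        · have hg2 : Integrable (fun ω => p * (φ (S ω) * Y a ω) + 2 ^ p * |Y a ω| ^ p) P :=
            (hprod_int.const_mul p).add ((hmom a).const_mul (2 ^ p))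
          exact hSp_int.add hg2
      have hg2 : Integrable (fun ω => p * (φ (S ω) * Y a ω) + 2 ^ p * |Y a ω| ^ p) P :=
        (hprod_int.const_mul p).add ((hmom a).const_mul (2 ^ p))
      have hsplit : ∫ ω, (|S ω| ^ p + (p * (φ (S ω) * Y a ω) + 2 ^ p * |Y a ω| ^ p)) ∂P
          = ∫ ω, |S ω| ^ p ∂P + (p * ∫ ω, φ (S ω) * Y a ω ∂P
            + 2 ^ p * ∫ ω, |Y a ω| ^ p ∂P) := by
        rw [integral_add hSp_int hg2,
          integral_add (hprod_int.const_mul p) ((hmom a).const_mul (2 ^ p)),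
          integral_const_mul, integral_const_mul]
      rw [hsplit, hcross, mul_zero] at hmono
      have : ∫ ω, |S ω| ^ p ∂P ≤ 2 ^ p * ∑ i ∈ s, ∫ ω, |Y i ω| ^ p ∂P := ih
      calc ∫ ω, |Y a ω + S ω| ^ p ∂P
          ≤ ∫ ω, |S ω| ^ p ∂P + (0 + 2 ^ p * ∫ ω, |Y a ω| ^ p ∂P) := hmono
        _ ≤ 2 ^ p * ∑ i ∈ s, ∫ ω, |Y i ω| ^ p ∂P
            + (0 + 2 ^ p * ∫ ω, |Y a ω| ^ p ∂P) := by linarith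
        _ = 2 ^ p * (∫ ω, |Y a ω| ^ p ∂P + ∑ i ∈ s, ∫ ω, |Y i ω| ^ p ∂P) := by ring
  simpa using main Finset.univ
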